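/- Suppose 𝔟 > ω₁ holds. Let D be a directed set with |D| ≤ ω₁ and define I = {A ∈ [D]^{≤ω} : for every x ∈ D, A ∩ {y : y ≤ x} is finite}. Then I is a P-ideal on the countable subsets of D: for every countable family {A_n : n ∈ ω} ⊆ I there is A ∈ I with A_n ⊆* A for all n. -/
import Mathlib


/-- The bounding number 𝔟: the least cardinality of a family of functions `ω → ω`
unbounded with respect to eventual domination `<*`. -/
noncomputable def boundingNum : Cardinal :=
  sInf {c : Cardinal | ∃ F : Set (ℕ → ℕ),
    (¬ ∃ g : ℕ → ℕ, ∀ f ∈ F, ∀ᶠ n in Filter.atTop, f n < g n) ∧ Cardinal.mk F = c}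

/-- Assume `𝔟 > ω₁`. Let `D` be a directed set of size `≤ ω₁` and let
`I = {A ∈ [D]^{≤ω} : ∀ x ∈ D, A ∩ pred(x) is finite}`. Then `I` is a P-ideal: for any
countably many members `A n` of `I` there is `A ∈ I` with `A n ⊆* A` for all `n`. -/
theorem trace_orthogonal_is_PIdeal (hb : Cardinal.aleph 1 < boundingNum)
    (D : Type) [PartialOrder D] (hdir : ∀ a b : D, ∃ c, a ≤ c ∧ b ≤ c)
    (hsize : Cardinal.mk D ≤ Cardinal.aleph 1)
    (A : ℕ → Set D)
    (hA : ∀ n, (A n).Countable ∧ ∀ x : D, (A n ∩ {y : D | y ≤ x}).Finite) :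
    ∃ B : Set D, (B.Countable ∧ ∀ x : D, (B ∩ {y : D | y ≤ x}).Finite) ∧
      ∀ n, (A n \ B).Finite := by
  rcases isEmpty_or_nonempty D with hD | hD
  · refine ⟨∅, ⟨Set.countable_empty, fun x => (IsEmpty.false x).elim⟩, fun n => ?_⟩
    have : A n = ∅ := Set.eq_empty_of_isEmpty _
    simp [this]
  · obtain ⟨d₀⟩ := hD
    -- enumerate each A n
    have henum : ∀ n, ∃ e : ℕ → D, A n ⊆ Set.range e := by
      intro n
      rcases (A n).eq_empty_or_nonempty with h | h
      · exact ⟨fun _ => d₀, by simp [h]⟩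
      · obtain ⟨e, he⟩ := ((hA n).1).exists_eq_range h
        exact ⟨e, he.le⟩
    choose e he using henum
    -- choose inverses
    have hinv : ∀ (n : ℕ) (a : D), ∃ k, a ∈ A n → e n k = a := by
      intro n a
      by_cases h : a ∈ A n
      · obtain ⟨k, hk⟩ := he n h
        exact ⟨k, fun _ => hk⟩
      · exact ⟨0, fun h' => absurd h' h⟩
    choose inv hinvs using hinv
    -- the family of functions indexed by D
    have hfx : ∀ (x : D) (n : ℕ), ∃ m, ∀ a ∈ A n ∩ {y : D | y ≤ x}, inv n a < m := by
      intro x n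
      have hfin : ((inv n) '' (A n ∩ {y : D | y ≤ x})).Finite := ((hA n).2 x).image _
      obtain ⟨m, hm⟩ := hfin.bddAbove
      exact ⟨m + 1, fun a ha => Nat.lt_succ_of_le (hm ⟨a, ha, rfl⟩)⟩
    choose f hf using hfx
    -- the family {f x : x ∈ D} is bounded since |D| ≤ ℵ₁ < 𝔟
    have hbd : ∃ g : ℕ → ℕ, ∀ x : D, ∀ᶠ n in Filter.atTop, f x n < g n := by
      by_contra hcon
      have hunb : ¬ ∃ g : ℕ → ℕ, ∀ h ∈ Set.range f, ∀ᶠ n in Filter.atTop, h n < g n := by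
        rintro ⟨g, hg⟩
        exact hcon ⟨g, fun x => hg (f x) ⟨x, rfl⟩⟩
      have h1 : boundingNum ≤ Cardinal.mk (Set.range f) :=
        csInf_le (OrderBot.bddBelow _) ⟨Set.range f, hunb, rfl⟩
      have h2 : Cardinal.mk (Set.range f) ≤ Cardinal.mk D := Cardinal.mk_range_le
      exact absurd (h1.trans (h2.trans hsize)) (not_le.mpr hb)
    obtain ⟨g, hg⟩ := hbd
    refine ⟨⋃ n, (A n \ (e n) '' Set.Iio (g n)), ⟨?_, ?_⟩, ?_⟩
    · exact Set.countable_iUnion fun n => ((hA n).1).mono Set.diff_subset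
    · intro x
      obtain ⟨N, hN⟩ := Filter.eventually_atTop.mp (hg x)
      apply Set.Finite.subset (Set.Finite.biUnion (Set.finite_Iio N)
        (fun n _ => (hA n).2 x))
      rintro a ⟨haB, hax⟩
      obtain ⟨n, haA, hne⟩ : ∃ n, a ∈ A n ∧ a ∉ (e n) '' Set.Iio (g n) := by
        simpa using haB
      have hnN : n < N := by
        by_contra hn
        push_neg at hn
        exact hne ⟨inv n a, lt_trans (hf x n a ⟨haA, hax⟩) (hN n hn), hinvs n a haA⟩
      exact Set.mem_biUnion hnN ⟨haA, hax⟩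
    · intro n
      apply Set.Finite.subset ((Set.finite_Iio (g n)).image (e n))
      rintro a ⟨haA, haB⟩
      by_contra hne
      exact haB (Set.mem_iUnion.mpr ⟨n, haA, hne⟩)
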